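/- Let u > 0 and define μ₁(a') = [(1/π)√(a'−u) + (u/(2π))(a'−u)^{−1/2}]·1_{a'>u} − (1/π)√(a')·1_{a'>0}. Then for every a > u, the principal value integral vanishes: lim_{ε→0⁺} ∫_{|a'−a|>ε} μ₁(a')/(a − a') da' = 0. -/

import Mathlib

open Real Filter Set MeasureTheory

/-- `μ₁(a') = [(1/π)√(a'−u) + (u/(2π))(a'−u)^{−1/2}]·1_{a'>u} − (1/π)√(a')·1_{a'>0}`. -/
noncomputable def mu1 (u : ℝ) (x : ℝ) : ℝ :=
  (if u < x then 1 / π * Real.sqrt (x - u) + u / (2 * π) * (x - u) ^ (-(1 : ℝ) / 2) else 0)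
    - (if 0 < x then 1 / π * Real.sqrt x else 0)

open Topology

section AuxPV

private lemma hasDerivAt_sqrt_sub (b x : ℝ) (h : b < x) :
    HasDerivAt (fun t => Real.sqrt (t - b)) (1 / (2 * Real.sqrt (x - b))) x := by
  have := (Real.hasDerivAt_sqrt (x := x - b) (by linarith)).comp x
    ((hasDerivAt_id x).sub_const b)
  simpa [Function.comp_def] using this

private lemma hasDerivAt_L1 (a b x : ℝ) (hb : b < x) (hx : x < a) :
    HasDerivAt (fun t => -2 * Real.sqrt (t - b) +
      Real.sqrt (a - b) * (Real.log (Real.sqrt (a - b) + Real.sqrt (t - b)) -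
        Real.log (Real.sqrt (a - b) - Real.sqrt (t - b))))
      (Real.sqrt (x - b) / (a - x)) x := by
  have hs : 0 < Real.sqrt (x - b) := Real.sqrt_pos.2 (by linarith)
  have hcs : Real.sqrt (x - b) < Real.sqrt (a - b) :=
    Real.sqrt_lt_sqrt (by linarith) (by linarith)
  have hd := hasDerivAt_sqrt_sub b x hb
  set c := Real.sqrt (a - b) with hc
  set s := Real.sqrt (x - b) with hsdef
  have hs2 : s ^ 2 = x - b := Real.sq_sqrt (by linarith)
  have hc2 : c ^ 2 = a - b := Real.sq_sqrt (by linarith)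
  have h1 : HasDerivAt (fun t => Real.log (c + Real.sqrt (t - b)))
      ((1 / (2 * s)) / (c + s)) x := by
    have := (Real.hasDerivAt_log (x := c + s) (by positivity)).comp x
      ((hasDerivAt_const x c).add hd)
    simpa [div_eq_inv_mul, Function.comp_def, Pi.add_def] using this
  have h2 : HasDerivAt (fun t => Real.log (c - Real.sqrt (t - b)))
      ((-(1 / (2 * s))) / (c - s)) x := by
    have := (Real.hasDerivAt_log (x := c - s) (by linarith)).comp x
      ((hasDerivAt_const x c).sub hd)
    simpa [div_eq_inv_mul, neg_div, Function.comp_def, Pi.sub_def] using this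
  have key := (hd.const_mul (-2)).add ((h1.sub h2).const_mul c)
  refine key.congr_deriv ?_
  have h1 : c + s ≠ 0 := by positivity
  have h2 : c - s ≠ 0 := by linarith
  have h3 : a - x ≠ 0 := by linarith
  have h4 : s ≠ 0 := ne_of_gt hs
  have hax : a - x = c ^ 2 - s ^ 2 := by rw [hs2, hc2]; ring
  rw [hax]
  have h5 : c ^ 2 - s ^ 2 ≠ 0 := by rw [← hax]; exact h3
  field_simp
  ring

private lemma hasDerivAt_L2 (a b x : ℝ) (hb : b < x) (hx : x < a) :
    HasDerivAt (fun t => (Real.sqrt (a - b))⁻¹ *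
      (Real.log (Real.sqrt (a - b) + Real.sqrt (t - b)) -
        Real.log (Real.sqrt (a - b) - Real.sqrt (t - b))))
      ((Real.sqrt (x - b))⁻¹ / (a - x)) x := by
  have hs : 0 < Real.sqrt (x - b) := Real.sqrt_pos.2 (by linarith)
  have hcs : Real.sqrt (x - b) < Real.sqrt (a - b) :=
    Real.sqrt_lt_sqrt (by linarith) (by linarith)
  have hd := hasDerivAt_sqrt_sub b x hb
  set c := Real.sqrt (a - b) with hc
  set s := Real.sqrt (x - b) with hsdef
  have hs2 : s ^ 2 = x - b := Real.sq_sqrt (by linarith)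
  have hc2 : c ^ 2 = a - b := Real.sq_sqrt (by linarith)
  have h1 : HasDerivAt (fun t => Real.log (c + Real.sqrt (t - b)))
      ((1 / (2 * s)) / (c + s)) x := by
    have := (Real.hasDerivAt_log (x := c + s) (by positivity)).comp x
      ((hasDerivAt_const x c).add hd)
    simpa [div_eq_inv_mul, Function.comp_def, Pi.add_def] using this
  have h2 : HasDerivAt (fun t => Real.log (c - Real.sqrt (t - b)))
      ((-(1 / (2 * s))) / (c - s)) x := by
    have := (Real.hasDerivAt_log (x := c - s) (by linarith)).comp x
      ((hasDerivAt_const x c).sub hd)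
    simpa [div_eq_inv_mul, neg_div, Function.comp_def, Pi.sub_def] using this
  have key := (h1.sub h2).const_mul (c⁻¹)
  refine key.congr_deriv ?_
  have h1 : c + s ≠ 0 := by positivity
  have h2 : c - s ≠ 0 := by linarith
  have h3 : a - x ≠ 0 := by linarith
  have h4 : s ≠ 0 := ne_of_gt hs
  have hc0 : c ≠ 0 := by linarith
  have hax : a - x = c ^ 2 - s ^ 2 := by rw [hs2, hc2]; ring
  rw [hax]
  have h5 : c ^ 2 - s ^ 2 ≠ 0 := by rw [← hax]; exact h3
  field_simp
  ring

private lemma hasDerivAt_U1 (a b x : ℝ) (hb : b < a) (hx : a < x) :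
    HasDerivAt (fun t => -2 * Real.sqrt (t - b) +
      Real.sqrt (a - b) * (Real.log (Real.sqrt (t - b) + Real.sqrt (a - b)) -
        Real.log (Real.sqrt (t - b) - Real.sqrt (a - b))))
      (Real.sqrt (x - b) / (a - x)) x := by
  have hs : 0 < Real.sqrt (x - b) := Real.sqrt_pos.2 (by linarith)
  have hcs : Real.sqrt (a - b) < Real.sqrt (x - b) :=
    Real.sqrt_lt_sqrt (by linarith) (by linarith)
  have hd := hasDerivAt_sqrt_sub b x (by linarith)
  set c := Real.sqrt (a - b) with hc
  set s := Real.sqrt (x - b) with hsdef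
  have hs2 : s ^ 2 = x - b := Real.sq_sqrt (by linarith)
  have hc2 : c ^ 2 = a - b := Real.sq_sqrt (by linarith)
  have h1 : HasDerivAt (fun t => Real.log (Real.sqrt (t - b) + c))
      ((1 / (2 * s)) / (s + c)) x := by
    have hcpos : (0:ℝ) ≤ c := Real.sqrt_nonneg _
    have := (Real.hasDerivAt_log (x := s + c) (by positivity)).comp x
      (hd.add_const c)
    simpa [div_eq_inv_mul, Function.comp_def] using this
  have h2 : HasDerivAt (fun t => Real.log (Real.sqrt (t - b) - c))
      ((1 / (2 * s)) / (s - c)) x := by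
    have := (Real.hasDerivAt_log (x := s - c) (by linarith)).comp x
      (hd.sub_const c)
    simpa [div_eq_inv_mul, Function.comp_def] using this
  have key := (hd.const_mul (-2)).add ((h1.sub h2).const_mul c)
  refine key.congr_deriv ?_
  have hcnn : (0:ℝ) ≤ c := Real.sqrt_nonneg _
  have h1 : s + c ≠ 0 := by positivity
  have h2 : s - c ≠ 0 := by linarith
  have h3 : a - x ≠ 0 := by linarith
  have h4 : s ≠ 0 := ne_of_gt hs
  have hax : a - x = c ^ 2 - s ^ 2 := by rw [hs2, hc2]; ring
  rw [hax]
  have h5 : c ^ 2 - s ^ 2 ≠ 0 := by rw [← hax]; exact h3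
  field_simp
  ring

private lemma hasDerivAt_U2 (a b x : ℝ) (hb : b < a) (hx : a < x) :
    HasDerivAt (fun t => (Real.sqrt (a - b))⁻¹ *
      (Real.log (Real.sqrt (t - b) + Real.sqrt (a - b)) -
        Real.log (Real.sqrt (t - b) - Real.sqrt (a - b))))
      ((Real.sqrt (x - b))⁻¹ / (a - x)) x := by
  have hs : 0 < Real.sqrt (x - b) := Real.sqrt_pos.2 (by linarith)
  have hcs : Real.sqrt (a - b) < Real.sqrt (x - b) :=
    Real.sqrt_lt_sqrt (by linarith) (by linarith)
  have hd := hasDerivAt_sqrt_sub b x (by linarith)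
  set c := Real.sqrt (a - b) with hc
  set s := Real.sqrt (x - b) with hsdef
  have hs2 : s ^ 2 = x - b := Real.sq_sqrt (by linarith)
  have hc2 : c ^ 2 = a - b := Real.sq_sqrt (by linarith)
  have hcpos : (0:ℝ) < c := Real.sqrt_pos.2 (by linarith)
  have h1 : HasDerivAt (fun t => Real.log (Real.sqrt (t - b) + c))
      ((1 / (2 * s)) / (s + c)) x := by
    have := (Real.hasDerivAt_log (x := s + c) (by positivity)).comp x
      (hd.add_const c)
    simpa [div_eq_inv_mul, Function.comp_def] using this
  have h2 : HasDerivAt (fun t => Real.log (Real.sqrt (t - b) - c))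
      ((1 / (2 * s)) / (s - c)) x := by
    have := (Real.hasDerivAt_log (x := s - c) (by linarith)).comp x
      (hd.sub_const c)
    simpa [div_eq_inv_mul, Function.comp_def] using this
  have key := (h1.sub h2).const_mul (c⁻¹)
  refine key.congr_deriv ?_
  have h1 : s + c ≠ 0 := by positivity
  have h2 : s - c ≠ 0 := by linarith
  have h3 : a - x ≠ 0 := by linarith
  have h4 : s ≠ 0 := ne_of_gt hs
  have hc0 : c ≠ 0 := ne_of_gt hcpos
  have hax : a - x = c ^ 2 - s ^ 2 := by rw [hs2, hc2]; ring
  rw [hax]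
  have h5 : c ^ 2 - s ^ 2 ≠ 0 := by rw [← hax]; exact h3
  field_simp
  ring

private lemma contOn_sqrtdiv (a b p q : ℝ) (hq : q < a) :
    ContinuousOn (fun x => Real.sqrt (x - b) / (a - x)) (Icc p q) := by
  apply ContinuousOn.div
  · exact (Real.continuous_sqrt.comp (continuous_id.sub continuous_const)).continuousOn
  · exact (continuous_const.sub continuous_id).continuousOn
  · intro x hx; have h2 := hx.2; intro h
    have : x = a := by linarith [sub_eq_zero.1 h]
    linarith

private lemma integrable_L2 (a b y : ℝ) (hb : b < y) (hy : y < a) :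
    IntervalIntegrable (fun x => (Real.sqrt (x - b))⁻¹ / (a - x)) volume b y := by
  have base : IntervalIntegrable (fun x : ℝ => (x - b) ^ (-(1:ℝ)/2)) volume b y := by
    have := (intervalIntegral.intervalIntegrable_rpow' (a := 0) (b := y - b)
      (r := -(1:ℝ)/2) (by norm_num)).comp_sub_right b
    simpa using this
  have base2 : IntervalIntegrable (fun x : ℝ => (x - b) ^ (-(1:ℝ)/2) * (a - y)⁻¹)
      volume b y := base.mul_const _
  apply base2.mono_fun
  · exact (((Real.continuous_sqrt.comp
      (continuous_id.sub continuous_const)).measurable.inv).div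
      (continuous_const.sub continuous_id).measurable).aestronglyMeasurable
  · rw [Filter.EventuallyLE, ae_restrict_iff' measurableSet_uIoc]
    apply Filter.Eventually.of_forall
    intro x hx
    rw [uIoc_of_le hb.le] at hx
    have hxb : b < x := hx.1
    have hxy : x ≤ y := hx.2
    have h1 : 0 < Real.sqrt (x - b) := Real.sqrt_pos.2 (by linarith)
    have h2 : (0:ℝ) < a - x := by linarith
    have h3 : (0:ℝ) < a - y := by linarith
    have hrw : (x - b) ^ (-(1:ℝ)/2) = (Real.sqrt (x - b))⁻¹ := by
      rw [Real.sqrt_eq_rpow, ← Real.rpow_neg (by linarith)]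
      norm_num
    have e1 : ‖(Real.sqrt (x - b))⁻¹ / (a - x)‖ = (Real.sqrt (x - b))⁻¹ * (a - x)⁻¹ := by
      rw [Real.norm_eq_abs, div_eq_mul_inv,
        abs_of_pos (mul_pos (inv_pos.2 h1) (inv_pos.2 h2))]
    have e2 : ‖(x - b) ^ (-(1:ℝ)/2) * (a - y)⁻¹‖
        = (Real.sqrt (x - b))⁻¹ * (a - y)⁻¹ := by
      rw [Real.norm_eq_abs, hrw,
        abs_of_pos (mul_pos (inv_pos.2 h1) (inv_pos.2 h3))]
    rw [e1, e2]
    gcongr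

private lemma integral_L1 (a b y : ℝ) (hb : b < y) (hy : y < a) :
    ∫ x in b..y, Real.sqrt (x - b) / (a - x)
      = -2 * Real.sqrt (y - b) + Real.sqrt (a - b) *
        (Real.log (Real.sqrt (a - b) + Real.sqrt (y - b)) -
          Real.log (Real.sqrt (a - b) - Real.sqrt (y - b))) := by
  have hc : 0 < Real.sqrt (a - b) := Real.sqrt_pos.2 (by linarith)
  have csq : Continuous (fun x : ℝ => Real.sqrt (x - b)) :=
    Real.continuous_sqrt.comp (continuous_id.sub continuous_const)
  have hcont : ContinuousOn (fun t => -2 * Real.sqrt (t - b) +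
      Real.sqrt (a - b) * (Real.log (Real.sqrt (a - b) + Real.sqrt (t - b)) -
        Real.log (Real.sqrt (a - b) - Real.sqrt (t - b)))) (Icc b y) := by
    apply ContinuousOn.add
    · exact (continuous_const.mul csq).continuousOn
    · apply ContinuousOn.mul continuousOn_const
      apply ContinuousOn.sub
      · apply ContinuousOn.log (continuous_const.add csq).continuousOn
        intro x hx
        have := Real.sqrt_nonneg (x - b); intro h; simp only [Pi.add_apply, Pi.sub_apply] at h; linarith [show (0:ℝ) < Real.sqrt (a-b) + Real.sqrt (x-b) by linarith]
      · apply ContinuousOn.log (continuous_const.sub csq).continuousOn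
        intro x hx
        have h1 : Real.sqrt (x - b) < Real.sqrt (a - b) :=
          Real.sqrt_lt_sqrt (by linarith [hx.1]) (by linarith [hx.2])
        intro h; simp only [Pi.add_apply, Pi.sub_apply] at h; linarith
  have hderiv : ∀ x ∈ Ioo b y, HasDerivWithinAt (fun t => -2 * Real.sqrt (t - b) +
      Real.sqrt (a - b) * (Real.log (Real.sqrt (a - b) + Real.sqrt (t - b)) -
        Real.log (Real.sqrt (a - b) - Real.sqrt (t - b))))
      (Real.sqrt (x - b) / (a - x)) (Ioi x) x :=
    fun x hx => (hasDerivAt_L1 a b x hx.1 (lt_trans hx.2 hy)).hasDerivWithinAt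
  have hint : IntervalIntegrable (fun x => Real.sqrt (x - b) / (a - x)) volume b y := by
    apply ContinuousOn.intervalIntegrable
    rw [uIcc_of_le hb.le]
    exact contOn_sqrtdiv a b b y hy
  rw [intervalIntegral.integral_eq_sub_of_hasDeriv_right_of_le hb.le hcont hderiv hint]
  simp [Real.sqrt_zero]

private lemma integral_L2 (a b y : ℝ) (hb : b < y) (hy : y < a) :
    ∫ x in b..y, (Real.sqrt (x - b))⁻¹ / (a - x)
      = (Real.sqrt (a - b))⁻¹ *
        (Real.log (Real.sqrt (a - b) + Real.sqrt (y - b)) -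
          Real.log (Real.sqrt (a - b) - Real.sqrt (y - b))) := by
  have hc : 0 < Real.sqrt (a - b) := Real.sqrt_pos.2 (by linarith)
  have csq : Continuous (fun x : ℝ => Real.sqrt (x - b)) :=
    Real.continuous_sqrt.comp (continuous_id.sub continuous_const)
  have hcont : ContinuousOn (fun t => (Real.sqrt (a - b))⁻¹ *
      (Real.log (Real.sqrt (a - b) + Real.sqrt (t - b)) -
        Real.log (Real.sqrt (a - b) - Real.sqrt (t - b)))) (Icc b y) := by
    apply ContinuousOn.mul continuousOn_const
    apply ContinuousOn.sub
    · apply ContinuousOn.log (continuous_const.add csq).continuousOn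
      intro x hx
      have := Real.sqrt_nonneg (x - b); intro h; simp only [Pi.add_apply, Pi.sub_apply] at h; linarith
    · apply ContinuousOn.log (continuous_const.sub csq).continuousOn
      intro x hx
      have h1 : Real.sqrt (x - b) < Real.sqrt (a - b) :=
        Real.sqrt_lt_sqrt (by linarith [hx.1]) (by linarith [hx.2])
      intro h; simp only [Pi.add_apply, Pi.sub_apply] at h; linarith
  have hderiv : ∀ x ∈ Ioo b y, HasDerivWithinAt (fun t => (Real.sqrt (a - b))⁻¹ *
      (Real.log (Real.sqrt (a - b) + Real.sqrt (t - b)) -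
        Real.log (Real.sqrt (a - b) - Real.sqrt (t - b))))
      ((Real.sqrt (x - b))⁻¹ / (a - x)) (Ioi x) x :=
    fun x hx => (hasDerivAt_L2 a b x hx.1 (lt_trans hx.2 hy)).hasDerivWithinAt
  rw [intervalIntegral.integral_eq_sub_of_hasDeriv_right_of_le hb.le hcont hderiv
    (integrable_L2 a b y hb hy)]
  simp [Real.sqrt_zero]
private lemma tendsto_sqrt_atTop : Tendsto Real.sqrt atTop atTop := by
  rw [show Real.sqrt = fun x : ℝ => x ^ ((1:ℝ)/2) from funext fun x => Real.sqrt_eq_rpow x]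
  exact tendsto_rpow_atTop (by norm_num)

private lemma tendsto_sqrt_shift (b : ℝ) :
    Tendsto (fun t : ℝ => Real.sqrt (t - b)) atTop atTop :=
  Real.tendsto_sqrt_atTop.comp (tendsto_atTop_add_const_right _ (-b) tendsto_id)

private lemma tendsto_A (u : ℝ) (hu : 0 ≤ u) :
    Tendsto (fun t : ℝ => 2 * Real.sqrt t - 2 * Real.sqrt (t - u)) atTop (𝓝 0) := by
  have h1 : Tendsto (fun t : ℝ => 2 * u * (Real.sqrt t + Real.sqrt (t - u))⁻¹)
      atTop (𝓝 (2 * u * 0)) := by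
    apply Tendsto.const_mul
    apply Tendsto.inv_tendsto_atTop
    exact Filter.Tendsto.atTop_add_atTop (tendsto_sqrt_shift 0 |>.congr (by simp)) (tendsto_sqrt_shift u)
  rw [mul_zero] at h1
  apply h1.congr'
  filter_upwards [eventually_ge_atTop (u + 1)] with t ht
  have h0 : (0:ℝ) ≤ t - u := by linarith
  have h0' : (0:ℝ) ≤ t := by linarith
  have hst : 0 < Real.sqrt t := Real.sqrt_pos.2 (by linarith)
  have hpos : 0 < Real.sqrt t + Real.sqrt (t - u) := by
    have := Real.sqrt_nonneg (t - u); linarith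
  have key : (2 * Real.sqrt t - 2 * Real.sqrt (t - u)) * (Real.sqrt t + Real.sqrt (t - u))
      = 2 * u := by
    have e1 : Real.sqrt t ^ 2 = t := Real.sq_sqrt h0'
    have e2 : Real.sqrt (t - u) ^ 2 = t - u := Real.sq_sqrt h0
    nlinarith [e1, e2]
  field_simp
  linarith [key]

private lemma tendsto_B (b c : ℝ) (hc : 0 < c) :
    Tendsto (fun t : ℝ => Real.log (Real.sqrt (t - b) + c) -
      Real.log (Real.sqrt (t - b) - c)) atTop (𝓝 0) := by
  have hden : Tendsto (fun t : ℝ => Real.sqrt (t - b) - c) atTop atTop :=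
    tendsto_atTop_add_const_right _ (-c) (tendsto_sqrt_shift b)
  have hratio : Tendsto (fun t : ℝ => 1 + 2 * c * (Real.sqrt (t - b) - c)⁻¹)
      atTop (𝓝 (1 + 2 * c * 0)) :=
    tendsto_const_nhds.add ((hden.inv_tendsto_atTop).const_mul _)
  rw [show (1:ℝ) + 2 * c * 0 = 1 by ring] at hratio
  have hlog : Tendsto (fun t : ℝ => Real.log (1 + 2 * c * (Real.sqrt (t - b) - c)⁻¹))
      atTop (𝓝 0) := by
    have := (Real.continuousAt_log one_ne_zero).tendsto.comp hratio
    simpa [Function.comp_def] using this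
  apply hlog.congr'
  filter_upwards [hden.eventually_ge_atTop 1] with t ht
  have h1 : 0 < Real.sqrt (t - b) - c := by linarith
  have h2 : 0 < Real.sqrt (t - b) + c := by linarith
  rw [← Real.log_div (by linarith) (by linarith)]
  congr 1
  field_simp
  ring

private lemma hasDerivAt_G (u a : ℝ) (hu : 0 < u) (ha : u < a) (x : ℝ) (hx : a < x) :
    HasDerivAt (fun t =>
      (-2 * Real.sqrt (t - u) + Real.sqrt (a - u) *
        (Real.log (Real.sqrt (t - u) + Real.sqrt (a - u)) -
          Real.log (Real.sqrt (t - u) - Real.sqrt (a - u)))) -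
      (-2 * Real.sqrt t + Real.sqrt a *
        (Real.log (Real.sqrt t + Real.sqrt a) -
          Real.log (Real.sqrt t - Real.sqrt a))))
      ((Real.sqrt (x - u) - Real.sqrt x) / (a - x)) x := by
  have h1 : HasDerivAt (fun t => -2 * Real.sqrt (t - u) +
      Real.sqrt (a - u) * (Real.log (Real.sqrt (t - u) + Real.sqrt (a - u)) -
        Real.log (Real.sqrt (t - u) - Real.sqrt (a - u))))
      (Real.sqrt (x - u) / (a - x)) x := hasDerivAt_U1 a u x ha hx
  have h2' := hasDerivAt_U1 a 0 x (by linarith) hx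
  simp only [sub_zero] at h2'
  have := h1.sub h2'
  rw [← sub_div] at this
  exact this

private lemma integral_U1 (u a y : ℝ) (hu : 0 < u) (ha : u < a) (hy : a < y) :
    (∫ x in Ioi y, (Real.sqrt (x - u) - Real.sqrt x) / (a - x)) =
      -((-2 * Real.sqrt (y - u) + Real.sqrt (a - u) *
        (Real.log (Real.sqrt (y - u) + Real.sqrt (a - u)) -
          Real.log (Real.sqrt (y - u) - Real.sqrt (a - u)))) -
      (-2 * Real.sqrt y + Real.sqrt a *
        (Real.log (Real.sqrt y + Real.sqrt a) -
          Real.log (Real.sqrt y - Real.sqrt a)))) := by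
  have hderiv : ∀ x ∈ Ici y, HasDerivAt (fun t =>
      (-2 * Real.sqrt (t - u) + Real.sqrt (a - u) *
        (Real.log (Real.sqrt (t - u) + Real.sqrt (a - u)) -
          Real.log (Real.sqrt (t - u) - Real.sqrt (a - u)))) -
      (-2 * Real.sqrt t + Real.sqrt a *
        (Real.log (Real.sqrt t + Real.sqrt a) -
          Real.log (Real.sqrt t - Real.sqrt a))))
      ((Real.sqrt (x - u) - Real.sqrt x) / (a - x)) x :=
    fun x hx => hasDerivAt_G u a hu ha x (lt_of_lt_of_le hy hx)
  have hpos : ∀ x ∈ Ioi y, 0 ≤ (Real.sqrt (x - u) - Real.sqrt x) / (a - x) := by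
    intro x hx
    have hax : a < x := lt_trans hy hx
    apply div_nonneg_of_nonpos
    · have : Real.sqrt (x - u) ≤ Real.sqrt x := Real.sqrt_le_sqrt (by linarith)
      linarith
    · linarith
  have htend : Tendsto (fun t =>
      (-2 * Real.sqrt (t - u) + Real.sqrt (a - u) *
        (Real.log (Real.sqrt (t - u) + Real.sqrt (a - u)) -
          Real.log (Real.sqrt (t - u) - Real.sqrt (a - u)))) -
      (-2 * Real.sqrt t + Real.sqrt a *
        (Real.log (Real.sqrt t + Real.sqrt a) -
          Real.log (Real.sqrt t - Real.sqrt a)))) atTop (𝓝 0) := by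
    have hA := tendsto_A u hu.le
    have hB1 := tendsto_B u (Real.sqrt (a - u)) (Real.sqrt_pos.2 (by linarith))
    have hB2 := tendsto_B 0 (Real.sqrt a) (Real.sqrt_pos.2 (by linarith))
    simp only [sub_zero] at hB2
    have := (hA.add (hB1.const_mul (Real.sqrt (a - u)))).sub
      (hB2.const_mul (Real.sqrt a))
    rw [show (0:ℝ) + Real.sqrt (a - u) * 0 - Real.sqrt a * 0 = 0 by ring] at this
    apply this.congr
    intro t; ring
  have := integral_Ioi_of_hasDerivAt_of_nonneg' hderiv hpos htend
  rw [this]; ring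

private lemma integrableOn_U1 (u a y : ℝ) (hu : 0 < u) (ha : u < a) (hy : a < y) :
    IntegrableOn (fun x => (Real.sqrt (x - u) - Real.sqrt x) / (a - x)) (Ioi y) := by
  have hderiv : ∀ x ∈ Ici y, HasDerivAt (fun t =>
      (-2 * Real.sqrt (t - u) + Real.sqrt (a - u) *
        (Real.log (Real.sqrt (t - u) + Real.sqrt (a - u)) -
          Real.log (Real.sqrt (t - u) - Real.sqrt (a - u)))) -
      (-2 * Real.sqrt t + Real.sqrt a *
        (Real.log (Real.sqrt t + Real.sqrt a) -
          Real.log (Real.sqrt t - Real.sqrt a))))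
      ((Real.sqrt (x - u) - Real.sqrt x) / (a - x)) x :=
    fun x hx => hasDerivAt_G u a hu ha x (lt_of_lt_of_le hy hx)
  have hpos : ∀ x ∈ Ioi y, 0 ≤ (Real.sqrt (x - u) - Real.sqrt x) / (a - x) := by
    intro x hx
    have hax : a < x := lt_trans hy hx
    apply div_nonneg_of_nonpos
    · have : Real.sqrt (x - u) ≤ Real.sqrt x := Real.sqrt_le_sqrt (by linarith)
      linarith
    · linarith
  have htend : Tendsto (fun t =>
      (-2 * Real.sqrt (t - u) + Real.sqrt (a - u) *
        (Real.log (Real.sqrt (t - u) + Real.sqrt (a - u)) -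
          Real.log (Real.sqrt (t - u) - Real.sqrt (a - u)))) -
      (-2 * Real.sqrt t + Real.sqrt a *
        (Real.log (Real.sqrt t + Real.sqrt a) -
          Real.log (Real.sqrt t - Real.sqrt a)))) atTop (𝓝 0) := by
    have hA := tendsto_A u hu.le
    have hB1 := tendsto_B u (Real.sqrt (a - u)) (Real.sqrt_pos.2 (by linarith))
    have hB2 := tendsto_B 0 (Real.sqrt a) (Real.sqrt_pos.2 (by linarith))
    simp only [sub_zero] at hB2
    have := (hA.add (hB1.const_mul (Real.sqrt (a - u)))).sub
      (hB2.const_mul (Real.sqrt a))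
    rw [show (0:ℝ) + Real.sqrt (a - u) * 0 - Real.sqrt a * 0 = 0 by ring] at this
    apply this.congr
    intro t; ring
  exact integrableOn_Ioi_deriv_of_nonneg' hderiv hpos htend

private lemma integral_U2 (u a y : ℝ) (hu : 0 < u) (ha : u < a) (hy : a < y) :
    (∫ x in Ioi y, (Real.sqrt (x - u))⁻¹ / (a - x)) =
      -((Real.sqrt (a - u))⁻¹ *
        (Real.log (Real.sqrt (y - u) + Real.sqrt (a - u)) -
          Real.log (Real.sqrt (y - u) - Real.sqrt (a - u)))) := by
  have hderiv : ∀ x ∈ Ici y, HasDerivAt (fun t => (Real.sqrt (a - u))⁻¹ *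
      (Real.log (Real.sqrt (t - u) + Real.sqrt (a - u)) -
        Real.log (Real.sqrt (t - u) - Real.sqrt (a - u))))
      ((Real.sqrt (x - u))⁻¹ / (a - x)) x :=
    fun x hx => hasDerivAt_U2 a u x ha (lt_of_lt_of_le hy hx)
  have hneg : ∀ x ∈ Ioi y, (Real.sqrt (x - u))⁻¹ / (a - x) ≤ 0 := by
    intro x hx
    have hax : a < x := lt_trans hy hx
    apply div_nonpos_of_nonneg_of_nonpos
    · positivity
    · linarith
  have htend : Tendsto (fun t => (Real.sqrt (a - u))⁻¹ *
      (Real.log (Real.sqrt (t - u) + Real.sqrt (a - u)) -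
        Real.log (Real.sqrt (t - u) - Real.sqrt (a - u)))) atTop (𝓝 0) := by
    have hB := tendsto_B u (Real.sqrt (a - u)) (Real.sqrt_pos.2 (by linarith))
    have := hB.const_mul (Real.sqrt (a - u))⁻¹
    simpa using this
  have := integral_Ioi_of_hasDerivAt_of_nonpos' hderiv hneg htend
  rw [this]; ring

private lemma integrableOn_U2 (u a y : ℝ) (hu : 0 < u) (ha : u < a) (hy : a < y) :
    IntegrableOn (fun x => (Real.sqrt (x - u))⁻¹ / (a - x)) (Ioi y) := by
  have hderiv : ∀ x ∈ Ici y, HasDerivAt (fun t => (Real.sqrt (a - u))⁻¹ *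
      (Real.log (Real.sqrt (t - u) + Real.sqrt (a - u)) -
        Real.log (Real.sqrt (t - u) - Real.sqrt (a - u))))
      ((Real.sqrt (x - u))⁻¹ / (a - x)) x :=
    fun x hx => hasDerivAt_U2 a u x ha (lt_of_lt_of_le hy hx)
  have hneg : ∀ x ∈ Ioi y, (Real.sqrt (x - u))⁻¹ / (a - x) ≤ 0 := by
    intro x hx
    have hax : a < x := lt_trans hy hx
    apply div_nonpos_of_nonneg_of_nonpos
    · positivity
    · linarith
  have htend : Tendsto (fun t => (Real.sqrt (a - u))⁻¹ *
      (Real.log (Real.sqrt (t - u) + Real.sqrt (a - u)) -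
        Real.log (Real.sqrt (t - u) - Real.sqrt (a - u)))) atTop (𝓝 0) := by
    have hB := tendsto_B u (Real.sqrt (a - u)) (Real.sqrt_pos.2 (by linarith))
    have := hB.const_mul (Real.sqrt (a - u))⁻¹
    simpa using this
  exact integrableOn_Ioi_deriv_of_nonpos' hderiv hneg htend

private noncomputable def Efun (u a : ℝ) : ℝ → ℝ := fun ε =>
  1/π * (2*Real.sqrt (a-ε) - 2*Real.sqrt (a+ε) + 2*Real.sqrt (a+ε-u) - 2*Real.sqrt (a-ε-u))
  + (2*Real.sqrt (a-u)/π + u/(π*Real.sqrt (a-u))) *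
      (Real.log (Real.sqrt (a-u) + Real.sqrt (a-ε-u)) -
        Real.log (Real.sqrt (a+ε-u) + Real.sqrt (a-u)))
  - (2*Real.sqrt a/π) *
      (Real.log (Real.sqrt a + Real.sqrt (a-ε)) - Real.log (Real.sqrt (a+ε) + Real.sqrt a))

private lemma rpow_neg_half (t : ℝ) (ht : 0 < t) :
    t ^ (-(1:ℝ)/2) = (Real.sqrt t)⁻¹ := by
  rw [Real.sqrt_eq_rpow, ← Real.rpow_neg ht.le]
  norm_num

private lemma tendsto_Efun (u a : ℝ) (hu : 0 < u) (ha : u < a) :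
    Tendsto (Efun u a) (𝓝 0) (𝓝 0) := by
  have ha0 : 0 < a := lt_trans hu ha
  have hsq : ∀ c : ℝ, Continuous (fun ε : ℝ => Real.sqrt (c - ε)) := fun c =>
    Real.continuous_sqrt.comp (continuous_const.sub continuous_id)
  have hsq' : ∀ c : ℝ, Continuous (fun ε : ℝ => Real.sqrt (c + ε)) := fun c =>
    Real.continuous_sqrt.comp (continuous_const.add continuous_id)
  have hsq2 : ∀ c : ℝ, Continuous (fun ε : ℝ => Real.sqrt (c + ε - u)) := fun c => by
    have : (fun ε : ℝ => Real.sqrt (c + ε - u)) = fun ε : ℝ => Real.sqrt ((c - u) + ε) := by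
      funext ε; ring_nf
    rw [this]; exact hsq' (c - u)
  have hsq3 : ∀ c : ℝ, Continuous (fun ε : ℝ => Real.sqrt (c - ε - u)) := fun c => by
    have : (fun ε : ℝ => Real.sqrt (c - ε - u)) = fun ε : ℝ => Real.sqrt ((c - u) - ε) := by
      funext ε; ring_nf
    rw [this]; exact hsq (c - u)
  have hlog1 : ContinuousAt (fun ε : ℝ =>
      Real.log (Real.sqrt (a-u) + Real.sqrt (a-ε-u))) 0 := by
    apply (Real.continuousAt_log ?_).comp
    · exact (continuous_const.add (hsq3 a)).continuousAt
    · simp only [sub_zero]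
      have : 0 < Real.sqrt (a - u) := Real.sqrt_pos.2 (by linarith)
      positivity
  have hlog2 : ContinuousAt (fun ε : ℝ =>
      Real.log (Real.sqrt (a+ε-u) + Real.sqrt (a-u))) 0 := by
    apply (Real.continuousAt_log ?_).comp
    · exact ((hsq2 a).add continuous_const).continuousAt
    · simp only [add_zero]
      have : 0 < Real.sqrt (a - u) := Real.sqrt_pos.2 (by linarith)
      positivity
  have hlog3 : ContinuousAt (fun ε : ℝ =>
      Real.log (Real.sqrt a + Real.sqrt (a-ε))) 0 := by
    apply (Real.continuousAt_log ?_).comp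
    · exact (continuous_const.add (hsq a)).continuousAt
    · simp only [sub_zero]
      have : 0 < Real.sqrt a := Real.sqrt_pos.2 (by linarith)
      positivity
  have hlog4 : ContinuousAt (fun ε : ℝ =>
      Real.log (Real.sqrt (a+ε) + Real.sqrt a)) 0 := by
    apply (Real.continuousAt_log ?_).comp
    · exact ((hsq' a).add continuous_const).continuousAt
    · simp only [add_zero]
      have : 0 < Real.sqrt a := Real.sqrt_pos.2 (by linarith)
      positivity
  have hcont : ContinuousAt (Efun u a) 0 := by
    unfold Efun
    apply ContinuousAt.sub
    apply ContinuousAt.add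
    · exact (continuous_const.mul ((((continuous_const.mul (hsq a)).sub
        (continuous_const.mul (hsq' a))).add
        (continuous_const.mul (hsq2 a))).sub
        (continuous_const.mul (hsq3 a)))).continuousAt
    · exact continuousAt_const.mul (hlog1.sub hlog2)
    · exact continuousAt_const.mul (hlog3.sub hlog4)
  have hval : Efun u a 0 = 0 := by
    unfold Efun
    simp only [sub_zero, add_zero]
    ring
  have := hcont.tendsto
  rwa [hval] at this

private lemma log_sqrt_diff (p q e : ℝ) (h0 : 0 ≤ q) (hlt : q < p) (he : p - q = e) :
    Real.log (Real.sqrt p - Real.sqrt q)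
      = Real.log e - Real.log (Real.sqrt p + Real.sqrt q) := by
  have h1 : 0 < Real.sqrt p - Real.sqrt q := sub_pos.2 (Real.sqrt_lt_sqrt h0 hlt)
  have h2 : 0 < Real.sqrt p + Real.sqrt q := by
    have : 0 < Real.sqrt p := Real.sqrt_pos.2 (by linarith)
    have := Real.sqrt_nonneg q; linarith
  rw [eq_sub_iff_add_eq, ← Real.log_mul h1.ne' h2.ne']
  congr 1
  have e1 : Real.sqrt p ^ 2 = p := Real.sq_sqrt (by linarith)
  have e2 : Real.sqrt q ^ 2 = q := Real.sq_sqrt h0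
  nlinarith [e1, e2]

set_option maxHeartbeats 1000000 in
private lemma value_lemma (u a ε : ℝ) (hu : 0 < u) (ha : u < a)
    (he : 0 < ε) (he2 : ε < a - u) :
    (∫ x in {x : ℝ | ε < |x - a|}, mu1 u x / (a - x)) = Efun u a ε := by
  have ha0 : 0 < a := lt_trans hu ha
  have hae : u < a - ε := by linarith
  have hae0 : 0 < a - ε := by linarith
  have hbe : a < a + ε := by linarith
  set g : ℝ → ℝ := fun x => mu1 u x / (a - x) with hg
  -- set decomposition
  have hset : {x : ℝ | ε < |x - a|} = Iio (a - ε) ∪ Ioi (a + ε) := by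
    ext x
    simp only [mem_setOf_eq, mem_union, mem_Iio, mem_Ioi, lt_abs]
    constructor
    · rintro (h | h)
      · right; linarith
      · left; linarith
    · rintro (h | h)
      · right; linarith
      · left; linarith
  have hsplit2 : Iio (a - ε) = Iic 0 ∪ Ioo 0 (a - ε) := by
    ext x
    simp only [mem_Iio, mem_union, mem_Iic, mem_Ioo]
    constructor
    · intro h
      rcases le_or_gt x 0 with h0 | h0
      · exact Or.inl h0
      · exact Or.inr ⟨h0, h⟩
    · rintro (h | h) <;> [linarith; exact h.2]
  -- pointwise identities
  have eq1 : EqOn g (fun x => -(1/π) * (Real.sqrt x / (a - x))) (Icc 0 u) := by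
    intro x hx
    have hnx : ¬ u < x := not_lt.2 hx.2
    simp only [hg, mu1, if_neg hnx]
    by_cases h0 : 0 < x
    · rw [if_pos h0]; ring
    · have : x = 0 := le_antisymm (not_lt.1 h0) hx.1
      subst this
      simp
  have eq2 : EqOn g (fun x => 1/π * (Real.sqrt (x - u) / (a - x))
      + u/(2*π) * ((Real.sqrt (x - u))⁻¹ / (a - x))
      - 1/π * (Real.sqrt x / (a - x))) (Icc u (a - ε)) := by
    intro x hx
    have h0x : 0 < x := lt_of_lt_of_le hu hx.1
    by_cases hxu : u < x
    · simp only [hg, mu1, if_pos hxu, if_pos h0x,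
        rpow_neg_half (x - u) (by linarith)]
      ring
    · have hxeq : x = u := le_antisymm (not_lt.1 hxu) hx.1
      subst hxeq
      simp only [hg, mu1, if_neg (lt_irrefl x), if_pos hu, sub_self,
        Real.sqrt_zero, inv_zero,
        Real.zero_rpow (show (-(1:ℝ)/2) ≠ 0 by norm_num)]
      ring
  have eq3 : EqOn g (fun x => 1/π * ((Real.sqrt (x - u) - Real.sqrt x) / (a - x))
      + u/(2*π) * ((Real.sqrt (x - u))⁻¹ / (a - x))) (Ioi (a + ε)) := by
    intro x hx
    have hxu : u < x := by simp only [mem_Ioi] at hx; linarith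
    have h0x : 0 < x := lt_trans hu hxu
    simp only [hg, mu1, if_pos hxu, if_pos h0x, rpow_neg_half (x - u) (by linarith)]
    ring
  -- interval integrability
  have ii0 : IntervalIntegrable (fun x => Real.sqrt x / (a - x)) volume 0 u := by
    apply ContinuousOn.intervalIntegrable
    rw [uIcc_of_le hu.le]
    have := contOn_sqrtdiv a 0 0 u ha
    simpa using this
  have ii3 : IntervalIntegrable (fun x => Real.sqrt x / (a - x)) volume u (a - ε) := by
    apply ContinuousOn.intervalIntegrable
    rw [uIcc_of_le hae.le]
    have := contOn_sqrtdiv a 0 u (a - ε) (by linarith)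
    simpa using this
  have ii1 : IntervalIntegrable (fun x => Real.sqrt (x - u) / (a - x)) volume u (a - ε) := by
    apply ContinuousOn.intervalIntegrable
    rw [uIcc_of_le hae.le]
    exact contOn_sqrtdiv a u u (a - ε) (by linarith)
  have ii2 : IntervalIntegrable (fun x => (Real.sqrt (x - u))⁻¹ / (a - x)) volume u (a - ε) :=
    integrable_L2 a u (a - ε) hae (by linarith)
  have iform : IntervalIntegrable (fun x => 1/π * (Real.sqrt (x - u) / (a - x))
      + u/(2*π) * ((Real.sqrt (x - u))⁻¹ / (a - x))
      - 1/π * (Real.sqrt x / (a - x))) volume u (a - ε) :=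
    ((ii1.const_mul _).add (ii2.const_mul _)).sub (ii3.const_mul _)
  have ig1 : IntervalIntegrable g volume 0 u := by
    apply (ii0.const_mul (-(1/π))).congr_ae
    rw [Filter.EventuallyEq, ae_restrict_iff' measurableSet_uIoc]
    apply Filter.Eventually.of_forall
    intro x hx
    rw [uIoc_of_le hu.le] at hx
    exact (eq1 ⟨hx.1.le, hx.2⟩).symm
  have ig2 : IntervalIntegrable g volume u (a - ε) := by
    apply iform.congr_ae
    rw [Filter.EventuallyEq, ae_restrict_iff' measurableSet_uIoc]
    apply Filter.Eventually.of_forall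
    intro x hx
    rw [uIoc_of_le hae.le] at hx
    exact (eq2 ⟨hx.1.le, hx.2⟩).symm
  have iU1 : IntegrableOn (fun x => (Real.sqrt (x - u) - Real.sqrt x) / (a - x))
      (Ioi (a + ε)) := integrableOn_U1 u a (a + ε) hu ha hbe
  have iU2 : IntegrableOn (fun x => (Real.sqrt (x - u))⁻¹ / (a - x))
      (Ioi (a + ε)) := integrableOn_U2 u a (a + ε) hu ha hbe
  have iUform : IntegrableOn (fun x => 1/π * ((Real.sqrt (x - u) - Real.sqrt x) / (a - x))
      + u/(2*π) * ((Real.sqrt (x - u))⁻¹ / (a - x))) (Ioi (a + ε)) :=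
    (iU1.const_mul _).add (iU2.const_mul _)
  have igU : IntegrableOn g (Ioi (a + ε)) :=
    iUform.congr_fun (fun x hx => (eq3 hx).symm) measurableSet_Ioi
  have igIic : IntegrableOn g (Iic 0) := by
    apply (integrableOn_zero (ε' := ℝ)).congr_fun ?_ measurableSet_Iic
    intro x hx
    simp only [mem_Iic] at hx
    simp only [hg, mu1, if_neg (by linarith : ¬ u < x), if_neg (by linarith : ¬ (0:ℝ) < x),
      sub_zero, zero_div]
  have igIoo : IntegrableOn g (Ioo 0 (a - ε)) := by
    have h1 : IntegrableOn g (Ioc 0 u) := by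
      rw [← intervalIntegrable_iff_integrableOn_Ioc_of_le hu.le]
      exact ig1
    have h2 : IntegrableOn g (Ioc u (a - ε)) := by
      rw [← intervalIntegrable_iff_integrableOn_Ioc_of_le hae.le]
      exact ig2
    apply (h1.union h2).mono_set
    intro x hx
    rcases le_or_gt x u with h | h
    · exact Or.inl ⟨hx.1, h⟩
    · exact Or.inr ⟨h, hx.2.le⟩
  have igIio : IntegrableOn g (Iio (a - ε)) := by
    rw [hsplit2]
    exact igIic.union igIoo
  -- values of pieces
  have L1a0u := integral_L1 a 0 u hu ha
  simp only [sub_zero] at L1a0u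
  have L1au := integral_L1 a u (a - ε) hae (by linarith)
  have L2au := integral_L2 a u (a - ε) hae (by linarith)
  have L1a0e := integral_L1 a 0 (a - ε) hae0 (by linarith)
  simp only [sub_zero] at L1a0e
  have hadj : (∫ x in (0:ℝ)..u, Real.sqrt x / (a - x))
      + (∫ x in u..(a - ε), Real.sqrt x / (a - x))
      = ∫ x in (0:ℝ)..(a - ε), Real.sqrt x / (a - x) :=
    intervalIntegral.integral_add_adjacent_intervals ii0 ii3
  have hU1 := integral_U1 u a (a + ε) hu ha hbe
  have hU2 := integral_U2 u a (a + ε) hu ha hbe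
  -- lower integral value
  have hlow1 : (∫ x in (0:ℝ)..u, g x) = -(1/π) * ∫ x in (0:ℝ)..u, Real.sqrt x / (a - x) := by
    rw [intervalIntegral.integral_congr (show EqOn g _ (uIcc 0 u) by
      rw [uIcc_of_le hu.le]; exact eq1)]
    exact intervalIntegral.integral_const_mul _ _
  have hlow2 : (∫ x in u..(a - ε), g x)
      = 1/π * (∫ x in u..(a - ε), Real.sqrt (x - u) / (a - x))
      + u/(2*π) * (∫ x in u..(a - ε), (Real.sqrt (x - u))⁻¹ / (a - x))
      - 1/π * (∫ x in u..(a - ε), Real.sqrt x / (a - x)) := by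
    rw [intervalIntegral.integral_congr (show EqOn g _ (uIcc u (a - ε)) by
      rw [uIcc_of_le hae.le]; exact eq2)]
    rw [intervalIntegral.integral_sub ((ii1.const_mul _).add (ii2.const_mul _))
      (ii3.const_mul _),
      intervalIntegral.integral_add (ii1.const_mul _) (ii2.const_mul _),
      intervalIntegral.integral_const_mul, intervalIntegral.integral_const_mul,
      intervalIntegral.integral_const_mul]
  have hIiozero : (∫ x in Iic (0:ℝ), g x) = 0 := by
    apply setIntegral_eq_zero_of_forall_eq_zero
    intro x hx
    simp only [mem_Iic] at hx
    simp only [hg, mu1, if_neg (by linarith : ¬ u < x), if_neg (by linarith : ¬ (0:ℝ) < x),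
      sub_zero, zero_div]
  have hIioval : (∫ x in Iio (a - ε), g x)
      = (∫ x in (0:ℝ)..u, g x) + (∫ x in u..(a - ε), g x) := by
    rw [hsplit2, setIntegral_union (by
        rw [disjoint_left]; intro x hx hx2; exact absurd hx2.1 (not_lt.2 hx))
      measurableSet_Ioo igIic igIoo, hIiozero, zero_add,
      ← integral_Ioc_eq_integral_Ioo,
      ← intervalIntegral.integral_of_le hae0.le,
      ← intervalIntegral.integral_add_adjacent_intervals ig1 ig2]
  -- upper integral value
  have hupval : (∫ x in Ioi (a + ε), g x)
      = 1/π * (∫ x in Ioi (a + ε), (Real.sqrt (x - u) - Real.sqrt x) / (a - x))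
      + u/(2*π) * (∫ x in Ioi (a + ε), (Real.sqrt (x - u))⁻¹ / (a - x)) := by
    rw [setIntegral_congr_fun measurableSet_Ioi eq3,
      integral_add (iU1.const_mul _) (iU2.const_mul _),
      integral_const_mul, integral_const_mul]
  -- combine
  have htotal : (∫ x in {x : ℝ | ε < |x - a|}, g x)
      = (∫ x in Iio (a - ε), g x) + ∫ x in Ioi (a + ε), g x := by
    rw [hset]
    exact setIntegral_union (by
        rw [disjoint_left]; intro x hx hx2
        simp only [mem_Iio] at hx; simp only [mem_Ioi] at hx2; linarith)
      measurableSet_Ioi igIio igU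
  -- log identities
  have hlogA := log_sqrt_diff (a-u) (a-ε-u) ε (by linarith) (by linarith) (by ring)
  have hlogB := log_sqrt_diff (a+ε-u) (a-u) ε (by linarith) (by linarith) (by ring)
  have hlogC := log_sqrt_diff a (a-ε) ε (by linarith) (by linarith) (by ring)
  have hlogD := log_sqrt_diff (a+ε) a ε (by linarith) (by linarith) (by ring)
  have hsubst : (∫ x in u..(a - ε), Real.sqrt x / (a - x))
      = (∫ x in (0:ℝ)..(a - ε), Real.sqrt x / (a - x))
        - (∫ x in (0:ℝ)..u, Real.sqrt x / (a - x)) := by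
    linarith [hadj]
  rw [htotal, hIioval, hlow1, hlow2, hupval]
  rw [hsubst, L1a0u, L1au, L2au, L1a0e, hU1, hU2]
  simp only [Efun]
  rw [hlogA, hlogB, hlogC, hlogD]
  ring

end AuxPV

/-- For `u > 0` and `a > u`, the principal value integral
`PV ∫ μ₁(a')/(a−a') da'` vanishes. -/
theorem mu1_pv_integral_vanishes (u : ℝ) (hu : 0 < u) (a : ℝ) (ha : u < a) :
    Tendsto (fun ε : ℝ => ∫ x in {x : ℝ | ε < |x - a|}, mu1 u x / (a - x))
      (nhdsWithin 0 (Set.Ioi 0)) (nhds 0) := by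
  have hev : (fun ε : ℝ => ∫ x in {x : ℝ | ε < |x - a|}, mu1 u x / (a - x))
      =ᶠ[nhdsWithin 0 (Set.Ioi 0)] Efun u a := by
    filter_upwards [Ioo_mem_nhdsGT_of_mem (show (0:ℝ) ∈ Ico (0:ℝ) (a - u) by
      constructor
      · exact le_refl 0
      · linarith)] with ε hε
    exact value_lemma u a ε hu ha hε.1 hε.2
  exact Tendsto.congr' hev.symm ((tendsto_Efun u a hu ha).mono_left nhdsWithin_le_nhds)
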